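/- For every p > 2 and every ε ∈ (0, 1/2), with p_ε = (p-2ε)/(1-ε), one has arcsin(1 - 2/p_ε) ≤ arcsin(1 - 2/p) + (2(p-2)/(p√(p-1))) ε. -/

import Mathlib

noncomputable section
open Real Matrix

lemma sin_sub_sin_ge {a b : ℝ} (ha : 0 ≤ a) (hab : a ≤ b) (hb : b ≤ π) :
    Real.cos b * (b - a) ≤ Real.sin b - Real.sin a := by
  have hmono : MonotoneOn (fun t => Real.sin t - Real.cos b * t) (Set.Icc a b) := by
    apply monotoneOn_of_deriv_nonneg (convex_Icc a b)
    · exact (Real.continuous_sin.sub (continuous_const.mul continuous_id)).continuousOn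
    · exact fun t ht =>
        ((Real.differentiable_sin.sub (differentiable_id.const_mul _)) t).differentiableWithinAt
    · intro t ht
      rw [interior_Icc] at ht
      have hd : HasDerivAt (fun t => Real.sin t - Real.cos b * t)
          (Real.cos t - Real.cos b * 1) t :=
        (Real.hasDerivAt_sin t).sub ((hasDerivAt_id t).const_mul (Real.cos b))
      rw [hd.deriv]
      have := Real.cos_le_cos_of_nonneg_of_le_pi (le_of_lt (lt_of_le_of_lt ha ht.1)) hb ht.2.le
      linarith
  have h := hmono (Set.left_mem_Icc.2 hab) (Set.right_mem_Icc.2 hab) hab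
  simp only at h
  nlinarith

theorem stmt5 (p ε : ℝ) (hp : 2 < p) (hε : ε ∈ Set.Ioo (0 : ℝ) (1 / 2)) :
    Real.arcsin (1 - 2 / ((p - 2 * ε) / (1 - ε))) ≤
      Real.arcsin (1 - 2 / p) + (2 * (p - 2) / (p * Real.sqrt (p - 1))) * ε := by
  obtain ⟨hε0, hε2⟩ := hε
  have h1ε : 0 < 1 - ε := by linarith
  have hpε : 0 < p - 2 * ε := by linarith
  have hp0 : 0 < p := by linarith
  have hrw : (1 : ℝ) - 2 / ((p - 2 * ε) / (1 - ε)) = 1 - 2 * (1 - ε) / (p - 2 * ε) := by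
    rw [div_div_eq_mul_div]
  rw [hrw]
  set y := 1 - 2 * (1 - ε) / (p - 2 * ε) with hy
  set x := 1 - 2 / p with hx
  have hx0 : 0 ≤ x := by
    rw [hx, sub_nonneg, div_le_one hp0]; linarith
  have hx1 : x < 1 := by
    rw [hx]; have : 0 < 2 / p := by positivity
    linarith
  have hy1 : y < 1 := by
    rw [hy]; have : 0 < 2 * (1 - ε) / (p - 2 * ε) := by positivity
    linarith
  have hyx : y - x = 2 * ε * (p - 2) / (p * (p - 2 * ε)) := by
    rw [hy, hx]; field_simp; ring
  have hxy : x ≤ y := by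
    have h0 : 0 ≤ 2 * ε * (p - 2) / (p * (p - 2 * ε)) :=
      div_nonneg (by nlinarith) (by nlinarith)
    have := hyx ▸ h0
    linarith
  set a := Real.arcsin x with hadef
  set b := Real.arcsin y with hbdef
  have hab : a ≤ b := Real.monotone_arcsin hxy
  have ha0 : 0 ≤ a := Real.arcsin_nonneg.2 hx0
  have hbπ : b < π / 2 := Real.arcsin_lt_pi_div_two.2 hy1
  have hbπ' : b ≤ π := by linarith [Real.pi_pos]
  have hsina : Real.sin a = x := Real.sin_arcsin (by linarith) hx1.le
  have hsinb : Real.sin b = y := Real.sin_arcsin (by linarith) hy1.le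
  have hcosb : Real.cos b = Real.sqrt (1 - y ^ 2) := Real.cos_arcsin y
  -- lower bound on cos b
  have h1y2 : 1 - y ^ 2 = 4 * (1 - ε) * (p - 1 - ε) / (p - 2 * ε) ^ 2 := by
    rw [hy]; field_simp; ring
  have hkey : (p - 1) / (p - 2 * ε) ^ 2 ≤ 1 - y ^ 2 := by
    rw [h1y2]
    apply div_le_div_of_nonneg_right ?_ (by positivity)
    · nlinarith [mul_nonneg (by linarith : (0:ℝ) ≤ p - 2) (by linarith : (0:ℝ) ≤ 3 - 4 * ε),
        mul_nonneg (by linarith : (0:ℝ) ≤ 1 - 2 * ε) (by linarith : (0:ℝ) ≤ 3 - 2 * ε)]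
  have hcos_ge : Real.sqrt (p - 1) / (p - 2 * ε) ≤ Real.cos b := by
    rw [hcosb]
    have heq : Real.sqrt (p - 1) / (p - 2 * ε) = Real.sqrt ((p - 1) / (p - 2 * ε) ^ 2) := by
      rw [Real.sqrt_div (by linarith : (0:ℝ) ≤ p - 1), Real.sqrt_sq hpε.le]
    rw [heq]
    exact Real.sqrt_le_sqrt hkey
  have hsqrt_pos : 0 < Real.sqrt (p - 1) := Real.sqrt_pos.2 (by linarith)
  have hcospos : 0 < Real.cos b := lt_of_lt_of_le (by positivity) hcos_ge
  -- mean value inequality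
  have hmv : Real.cos b * (b - a) ≤ y - x := by
    have := sin_sub_sin_ge ha0 hab hbπ'
    rw [hsina, hsinb] at this
    linarith
  set C := 2 * (p - 2) / (p * Real.sqrt (p - 1)) with hC
  have hCε : y - x ≤ Real.cos b * (C * ε) := by
    have heq : Real.sqrt (p - 1) / (p - 2 * ε) * (C * ε) = 2 * ε * (p - 2) / (p * (p - 2 * ε)) := by
      rw [hC]; field_simp
    have hCε0 : 0 ≤ C * ε := by
      have hC0 : 0 ≤ C := by
        rw [hC]; exact div_nonneg (by linarith) (by positivity)
      exact mul_nonneg hC0 hε0.le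
    have := mul_le_mul_of_nonneg_right hcos_ge hCε0
    rw [heq] at this
    linarith [hyx ▸ this]
  have h2 : b - a ≤ C * ε := by
    have h1 : Real.cos b * (b - a) ≤ Real.cos b * (C * ε) := le_trans hmv hCε
    exact le_of_mul_le_mul_left h1 hcospos
  linarith
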